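/- For the integer lattice ℤ³ scaled by 2 (i.e., Λ = 2ℤ³, minimal distance 2), the maximum number of touching pairs among n = k³ points (k ≥ 1) equals 3k³ − 3k², attained by the k×k×k cube of lattice points. -/

import Mathlib

open scoped Classical

noncomputable section

/-- Number of unordered touching pairs (distance exactly 2) in a finite point set. -/
def touchingPairs (S : Finset (EuclideanSpace ℝ (Fin 3))) : ℕ :=
  (S.sym2.filter fun p => ¬ p.IsDiag ∧ ∃ x y, p = s(x, y) ∧ dist x y = 2).card

/-- The lattice 2ℤ³ inside ℝ³. -/
def doubledIntLattice : Set (EuclideanSpace ℝ (Fin 3)) :=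
  {x | ∀ i : Fin 3, ∃ m : ℤ, x i = 2 * m}

abbrev V3 := ℤ × ℤ × ℤ

def succ3 (i : Fin 3) (x : V3) : V3 :=
  (x.1 + if i.val = 0 then 1 else 0, x.2.1 + if i.val = 1 then 1 else 0,
    x.2.2 + if i.val = 2 then 1 else 0)

def proj3 (i : Fin 3) (x : V3) : ℤ × ℤ :=
  if i.val = 0 then (x.2.1, x.2.2) else if i.val = 1 then (x.1, x.2.2) else (x.1, x.2.1)

def co3 (i : Fin 3) (x : V3) : ℤ := if i.val = 0 then x.1 else if i.val = 1 then x.2.1 else x.2.2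

def latPt (v : V3) : EuclideanSpace ℝ (Fin 3) :=
  WithLp.toLp 2 ![2 * (v.1 : ℝ), 2 * (v.2.1 : ℝ), 2 * (v.2.2 : ℝ)]

lemma wsum_succ3 (i : Fin 3) (x : V3) :
    (succ3 i x).1 + (succ3 i x).2.1 + (succ3 i x).2.2 = x.1 + x.2.1 + x.2.2 + 1 := by
  fin_cases i <;> norm_num [succ3] <;> ring

lemma proj3_succ3 (i : Fin 3) (x : V3) : proj3 i (succ3 i x) = proj3 i x := by
  fin_cases i <;> norm_num [succ3, proj3]

lemma co3_succ3 (i : Fin 3) (x : V3) : co3 i (succ3 i x) = co3 i x + 1 := by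
  fin_cases i <;> norm_num [succ3, co3]

lemma eq_of_proj3_co3 (i : Fin 3) {x y : V3} (h1 : proj3 i x = proj3 i y)
    (h2 : co3 i x = co3 i y) : x = y := by
  fin_cases i <;>
  · norm_num [proj3, co3, Prod.ext_iff] at h1 h2 ⊢
    omega

lemma succ3_inj_idx {i j : Fin 3} {x : V3} (h : succ3 i x = succ3 j x) : i = j := by
  fin_cases i <;> fin_cases j <;> simp_all [succ3, Prod.ext_iff]

lemma line_bound {Vt β : Type*} [DecidableEq Vt] [DecidableEq β] (A : Finset Vt)
    (σ : Vt → Vt) (f : Vt → ℤ) (g : Vt → β)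
    (hinj : ∀ x y, g x = g y → f x = f y → x = y)
    (hgσ : ∀ x, g (σ x) = g x) (hfσ : ∀ x, f (σ x) = f x + 1) :
    (A.filter fun x => σ x ∈ A).card + (A.image g).card ≤ A.card := by
  classical
  rcases A.eq_empty_or_nonempty with rfl | hA
  · simp
  haveI : Nonempty Vt := ⟨hA.choose⟩
  have hσinj : Function.Injective σ := by
    intro x y h
    exact hinj x y (by rw [← hgσ x, ← hgσ y, h]) (by
      have := congrArg f h; rw [hfσ, hfσ] at this; omega)
  set D := A.filter fun x => σ x ∈ A with hD
  set im := D.image σ with him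
  have him_sub : im ⊆ A := by
    intro y hy
    simp only [him, Finset.mem_image, hD, Finset.mem_filter] at hy
    obtain ⟨x, ⟨_, hx2⟩, rfl⟩ := hy
    exact hx2
  have hcard_im : im.card = D.card := Finset.card_image_of_injective _ hσinj
  have hmin : ∀ p ∈ A.image g, ∃ x, x ∈ A ∧ g x = p ∧
      ∀ y ∈ A, g y = p → f x ≤ f y := by
    intro p hp
    obtain ⟨x, hx, rfl⟩ := Finset.mem_image.mp hp
    have hne : (A.filter fun y => g y = g x).Nonempty := ⟨x, by simp [hx]⟩
    obtain ⟨z, hz, hz2⟩ := Finset.exists_min_image _ f hne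
    simp only [Finset.mem_filter] at hz
    exact ⟨z, hz.1, hz.2, fun y hy hgy => hz2 y (Finset.mem_filter.mpr ⟨hy, hgy⟩)⟩
  choose s hs1 hs2 hs3 using hmin
  have hcard : (A.image g).card ≤ (A \ im).card := by
    apply Finset.card_le_card_of_injOn
      (fun p => if h : p ∈ A.image g then s p h else Classical.arbitrary _)
    · intro p hp
      rw [Finset.mem_coe] at hp ⊢
      simp only [dif_pos hp]
      rw [Finset.mem_sdiff]
      refine ⟨hs1 p hp, ?_⟩
      intro hmem
      simp only [him, Finset.mem_image, hD, Finset.mem_filter] at hmem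
      obtain ⟨x, ⟨hxA, hσxA⟩, hx⟩ := hmem
      -- s p hp = σ x, with g x = g (σ x) = p and f (σ x) = f x + 1
      have hgx : g x = p := by rw [← hgσ x, hx]; exact hs2 p hp
      have := hs3 p hp x hxA hgx
      have hf : f (s p hp) = f x + 1 := by rw [← hx, hfσ]
      omega
    · intro p hp q hq hpq
      rw [Finset.mem_coe] at hp hq
      simp only [dif_pos hp, dif_pos hq] at hpq
      rw [← hs2 p hp, ← hs2 q hq, hpq]
  have htot : im.card + (A \ im).card = A.card := by
    rw [Finset.card_sdiff_of_subset him_sub]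
    have := Finset.card_le_card him_sub
    omega
  rw [hcard_im] at htot
  omega

lemma lw_arith (n L0 L1 L2 : ℕ) (Z : Finset ℤ) (c a b : ℤ → ℕ)
    (hfib : n = ∑ z ∈ Z, c z)
    (hsl0 : ∀ z, c z ≤ L0) (hsl12 : ∀ z, c z ≤ a z * b z)
    (hsuma : ∑ z ∈ Z, a z ≤ L1) (hsumb : ∑ z ∈ Z, b z ≤ L2) :
    n ^ 2 ≤ L0 * (L1 * L2) := by
  have key : (n : ℝ) ≤ Real.sqrt L0 * ∑ z ∈ Z, Real.sqrt (a z * b z) := by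
    rw [hfib]
    push_cast
    rw [Finset.mul_sum]
    apply Finset.sum_le_sum
    intro z _
    have h2 : ((c z : ℝ)) ≤ (L0 : ℝ) := by exact_mod_cast hsl0 z
    have h3 : ((c z : ℝ)) ≤ (a z : ℝ) * (b z : ℝ) := by exact_mod_cast hsl12 z
    have h1 : ((c z : ℝ)) ^ 2 ≤ (L0 : ℝ) * ((a z : ℝ) * (b z : ℝ)) := by
      nlinarith [Nat.cast_nonneg (α := ℝ) (c z)]
    calc ((c z : ℝ)) = Real.sqrt (((c z : ℝ)) ^ 2) := by
          rw [Real.sqrt_sq (by positivity)]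
      _ ≤ Real.sqrt ((L0 : ℝ) * ((a z : ℝ) * (b z : ℝ))) := Real.sqrt_le_sqrt h1
      _ = Real.sqrt (L0 : ℝ) * Real.sqrt ((a z : ℝ) * (b z : ℝ)) := by
          rw [Real.sqrt_mul (by positivity)]
  have cs : (∑ z ∈ Z, Real.sqrt ((a z : ℝ) * (b z : ℝ))) ^ 2 ≤
      (∑ z ∈ Z, (a z : ℝ)) * ∑ z ∈ Z, (b z : ℝ) := by
    apply Finset.sum_sq_le_sum_mul_sum_of_sq_eq_mul
    · intro i _; positivity
    · intro i _; positivity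
    · intro i _; rw [Real.sq_sqrt (by positivity)]
  have hfinal : (n : ℝ) ^ 2 ≤ (L0 : ℝ) * ((L1 : ℝ) * (L2 : ℝ)) := by
    have hkey2 : (n : ℝ) ^ 2 ≤ (Real.sqrt L0 * ∑ z ∈ Z, Real.sqrt ((a z : ℝ) * (b z : ℝ))) ^ 2 := by
      have h0 : (0 : ℝ) ≤ (n : ℝ) := by positivity
      push_cast at key
      nlinarith [key]
    have e1 : (Real.sqrt (L0 : ℝ)) ^ 2 = (L0 : ℝ) := Real.sq_sqrt (by positivity)
    have ha' : (∑ z ∈ Z, (a z : ℝ)) ≤ (L1 : ℝ) := by exact_mod_cast hsuma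
    have hb' : (∑ z ∈ Z, (b z : ℝ)) ≤ (L2 : ℝ) := by exact_mod_cast hsumb
    have hsa : (0:ℝ) ≤ ∑ z ∈ Z, (a z : ℝ) := Finset.sum_nonneg fun i _ => by positivity
    have hsb : (0:ℝ) ≤ ∑ z ∈ Z, (b z : ℝ) := Finset.sum_nonneg fun i _ => by positivity
    have hL0 : (0:ℝ) ≤ (L0 : ℝ) := by positivity
    calc (n : ℝ) ^ 2 ≤ (Real.sqrt L0 * ∑ z ∈ Z, Real.sqrt ((a z : ℝ) * (b z : ℝ))) ^ 2 := hkey2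
      _ = (L0 : ℝ) * (∑ z ∈ Z, Real.sqrt ((a z : ℝ) * (b z : ℝ))) ^ 2 := by
          rw [mul_pow, e1]
      _ ≤ (L0 : ℝ) * ((∑ z ∈ Z, (a z : ℝ)) * ∑ z ∈ Z, (b z : ℝ)) :=
          mul_le_mul_of_nonneg_left cs hL0
      _ ≤ (L0 : ℝ) * ((L1 : ℝ) * (L2 : ℝ)) := by
          apply mul_le_mul_of_nonneg_left _ hL0
          exact mul_le_mul ha' hb' hsb (by positivity)
  exact_mod_cast hfinal

lemma loomis_whitney (A : Finset V3) :
    A.card ^ 2 ≤ (A.image (proj3 0)).card *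
      ((A.image (proj3 1)).card * (A.image (proj3 2)).card) := by
  classical
  set Z := A.image (fun x => x.1) with hZ
  set Asl : ℤ → Finset V3 := fun z => A.filter (fun x => x.1 = z) with hAsl
  have hfib : A.card = ∑ z ∈ Z, (Asl z).card := by
    apply Finset.card_eq_sum_card_fiberwise
    intro x hx
    exact Finset.mem_image_of_mem _ hx
  have hsl0 : ∀ z, (Asl z).card ≤ (A.image (proj3 0)).card := by
    intro z
    have he : (Asl z).card = ((Asl z).image (proj3 0)).card := by
      rw [Finset.card_image_of_injOn]
      intro x hx y hy hxy
      simp only [hAsl, Finset.mem_coe, Finset.mem_filter] at hx hy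
      norm_num [proj3, Prod.ext_iff] at hxy
      obtain ⟨x1, x2, x3⟩ := x; obtain ⟨y1, y2, y3⟩ := y
      simp_all
    rw [he]
    exact Finset.card_le_card (Finset.image_subset_image (Finset.filter_subset _ _))
  have hsl12 : ∀ z, (Asl z).card ≤
      ((Asl z).image (proj3 1)).card * ((Asl z).image (proj3 2)).card := by
    intro z
    have := Finset.card_le_card_of_injOn
      (f := fun x => (proj3 1 x, proj3 2 x))
      (s := Asl z) (t := ((Asl z).image (proj3 1)) ×ˢ ((Asl z).image (proj3 2)))
      (by intro x hx
          exact Finset.mem_product.mpr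
            ⟨Finset.mem_image_of_mem _ hx, Finset.mem_image_of_mem _ hx⟩)
      (by intro x hx y hy hxy
          norm_num [proj3, Prod.ext_iff] at hxy
          obtain ⟨x1, x2, x3⟩ := x; obtain ⟨y1, y2, y3⟩ := y
          simp_all)
    simpa [Finset.card_product] using this
  have hsuma : ∑ z ∈ Z, ((Asl z).image (proj3 1)).card ≤ (A.image (proj3 1)).card := by
    have hdisj : ∀ z1 ∈ Z, ∀ z2 ∈ Z, z1 ≠ z2 →
        Disjoint ((Asl z1).image (proj3 1)) ((Asl z2).image (proj3 1)) := by
      intro z1 _ z2 _ hne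
      rw [Finset.disjoint_left]
      intro p hp1 hp2
      simp only [hAsl, Finset.mem_image, Finset.mem_filter] at hp1 hp2
      obtain ⟨x, ⟨_, hx1⟩, rfl⟩ := hp1
      obtain ⟨y, ⟨_, hy1⟩, hxy⟩ := hp2
      norm_num [proj3, Prod.ext_iff] at hxy
      exact hne (by omega)
    calc ∑ z ∈ Z, ((Asl z).image (proj3 1)).card
        = (Z.biUnion fun z => (Asl z).image (proj3 1)).card :=
          (Finset.card_biUnion hdisj).symm
      _ ≤ (A.image (proj3 1)).card := by
          apply Finset.card_le_card
          intro p hp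
          simp only [Finset.mem_biUnion] at hp
          obtain ⟨z, _, hp⟩ := hp
          exact Finset.image_subset_image (Finset.filter_subset _ _) hp
  have hsumb : ∑ z ∈ Z, ((Asl z).image (proj3 2)).card ≤ (A.image (proj3 2)).card := by
    have hdisj : ∀ z1 ∈ Z, ∀ z2 ∈ Z, z1 ≠ z2 →
        Disjoint ((Asl z1).image (proj3 2)) ((Asl z2).image (proj3 2)) := by
      intro z1 _ z2 _ hne
      rw [Finset.disjoint_left]
      intro p hp1 hp2
      simp only [hAsl, Finset.mem_image, Finset.mem_filter] at hp1 hp2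
      obtain ⟨x, ⟨_, hx1⟩, rfl⟩ := hp1
      obtain ⟨y, ⟨_, hy1⟩, hxy⟩ := hp2
      norm_num [proj3, Prod.ext_iff] at hxy
      exact hne (by omega)
    calc ∑ z ∈ Z, ((Asl z).image (proj3 2)).card
        = (Z.biUnion fun z => (Asl z).image (proj3 2)).card :=
          (Finset.card_biUnion hdisj).symm
      _ ≤ (A.image (proj3 2)).card := by
          apply Finset.card_le_card
          intro p hp
          simp only [Finset.mem_biUnion] at hp
          obtain ⟨z, _, hp⟩ := hp
          exact Finset.image_subset_image (Finset.filter_subset _ _) hp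
  exact lw_arith A.card _ _ _ Z (fun z => (Asl z).card)
    (fun z => ((Asl z).image (proj3 1)).card) (fun z => ((Asl z).image (proj3 2)).card)
    hfib hsl0 hsl12 hsuma hsumb

lemma latPt_apply0 (v : V3) : latPt v 0 = 2 * (v.1 : ℝ) := rfl
lemma latPt_apply1 (v : V3) : latPt v 1 = 2 * (v.2.1 : ℝ) := rfl
lemma latPt_apply2 (v : V3) : latPt v 2 = 2 * (v.2.2 : ℝ) := rfl

lemma latPt_inj : Function.Injective latPt := by
  intro v w h
  have h0 : latPt v 0 = latPt w 0 := by rw [h]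
  have h1 : latPt v 1 = latPt w 1 := by rw [h]
  have h2 : latPt v 2 = latPt w 2 := by rw [h]
  rw [latPt_apply0, latPt_apply0] at h0
  rw [latPt_apply1, latPt_apply1] at h1
  rw [latPt_apply2, latPt_apply2] at h2
  have e0 : v.1 = w.1 := by have := mul_left_cancel₀ (two_ne_zero) h0; exact Int.cast_injective this
  have e1 : v.2.1 = w.2.1 := by have := mul_left_cancel₀ (two_ne_zero) h1; exact Int.cast_injective this
  have e2 : v.2.2 = w.2.2 := by have := mul_left_cancel₀ (two_ne_zero) h2; exact Int.cast_injective this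
  exact Prod.ext e0 (Prod.ext e1 e2)

lemma latPt_mem : ∀ v, latPt v ∈ doubledIntLattice := by
  intro v i
  fin_cases i
  · exact ⟨v.1, latPt_apply0 v⟩
  · exact ⟨v.2.1, latPt_apply1 v⟩
  · exact ⟨v.2.2, latPt_apply2 v⟩

lemma exists_latPt {x : EuclideanSpace ℝ (Fin 3)} (hx : x ∈ doubledIntLattice) :
    ∃ v : V3, latPt v = x := by
  obtain ⟨m0, h0⟩ := hx 0
  obtain ⟨m1, h1⟩ := hx 1
  obtain ⟨m2, h2⟩ := hx 2
  refine ⟨(m0, m1, m2), PiLp.ext fun i => ?_⟩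
  fin_cases i
  · exact (latPt_apply0 (m0, m1, m2)).trans h0.symm
  · exact (latPt_apply1 (m0, m1, m2)).trans h1.symm
  · exact (latPt_apply2 (m0, m1, m2)).trans h2.symm

lemma int_sq_sum_eq_one {a b c : ℤ} (h : a ^ 2 + b ^ 2 + c ^ 2 = 1) :
    (a = 1 ∧ b = 0 ∧ c = 0) ∨ (a = -1 ∧ b = 0 ∧ c = 0) ∨
    (a = 0 ∧ b = 1 ∧ c = 0) ∨ (a = 0 ∧ b = -1 ∧ c = 0) ∨
    (a = 0 ∧ b = 0 ∧ c = 1) ∨ (a = 0 ∧ b = 0 ∧ c = -1) := by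
  have ha : a ^ 2 ≤ 1 := by nlinarith [sq_nonneg b, sq_nonneg c]
  have hb : b ^ 2 ≤ 1 := by nlinarith [sq_nonneg a, sq_nonneg c]
  have hc : c ^ 2 ≤ 1 := by nlinarith [sq_nonneg a, sq_nonneg b]
  have ha' : -1 ≤ a ∧ a ≤ 1 := abs_le.mp (by nlinarith [sq_abs a, abs_nonneg a])
  have hb' : -1 ≤ b ∧ b ≤ 1 := abs_le.mp (by nlinarith [sq_abs b, abs_nonneg b])
  have hc' : -1 ≤ c ∧ c ≤ 1 := abs_le.mp (by nlinarith [sq_abs c, abs_nonneg c])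
  obtain ⟨ha1, ha2⟩ := ha'; obtain ⟨hb1, hb2⟩ := hb'; obtain ⟨hc1, hc2⟩ := hc'
  interval_cases a <;> interval_cases b <;> interval_cases c <;> simp_all <;> omega

lemma dist_latPt_sq (v w : V3) :
    dist (latPt v) (latPt w) ^ 2 =
      4 * (((v.1 - w.1) ^ 2 + (v.2.1 - w.2.1) ^ 2 + (v.2.2 - w.2.2) ^ 2 : ℤ) : ℝ) := by
  rw [EuclideanSpace.dist_eq]
  rw [Real.sq_sqrt (by positivity)]
  rw [Fin.sum_univ_three]
  rw [latPt_apply0, latPt_apply0, latPt_apply1, latPt_apply1, latPt_apply2, latPt_apply2]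
  simp only [Real.dist_eq, sq_abs]
  push_cast
  ring

lemma dist_latPt_eq_two_iff (v w : V3) :
    dist (latPt v) (latPt w) = 2 ↔ ∃ i, w = succ3 i v ∨ v = succ3 i w := by
  constructor
  · intro h
    have hsq : dist (latPt v) (latPt w) ^ 2 = 4 := by rw [h]; norm_num
    rw [dist_latPt_sq] at hsq
    have hz : ((v.1 - w.1) ^ 2 + (v.2.1 - w.2.1) ^ 2 + (v.2.2 - w.2.2) ^ 2 : ℤ) = 1 := by
      have : (((v.1 - w.1) ^ 2 + (v.2.1 - w.2.1) ^ 2 + (v.2.2 - w.2.2) ^ 2 : ℤ) : ℝ) = 1 := by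
        linarith
      exact_mod_cast this
    obtain ⟨v1, v2, v3⟩ := v; obtain ⟨w1, w2, w3⟩ := w
    rcases int_sq_sum_eq_one hz with ⟨h1, h2, h3⟩ | ⟨h1, h2, h3⟩ | ⟨h1, h2, h3⟩ |
      ⟨h1, h2, h3⟩ | ⟨h1, h2, h3⟩ | ⟨h1, h2, h3⟩
    · dsimp only at h1 h2 h3; refine ⟨0, Or.inr ?_⟩; norm_num [succ3, Prod.ext_iff]; omega
    · dsimp only at h1 h2 h3; refine ⟨0, Or.inl ?_⟩; norm_num [succ3, Prod.ext_iff]; omega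
    · dsimp only at h1 h2 h3; refine ⟨1, Or.inr ?_⟩; norm_num [succ3, Prod.ext_iff]; omega
    · dsimp only at h1 h2 h3; refine ⟨1, Or.inl ?_⟩; norm_num [succ3, Prod.ext_iff]; omega
    · dsimp only at h1 h2 h3; refine ⟨2, Or.inr ?_⟩; norm_num [succ3, Prod.ext_iff]; omega
    · dsimp only at h1 h2 h3; refine ⟨2, Or.inl ?_⟩; norm_num [succ3, Prod.ext_iff]; omega
  · intro ⟨i, hi⟩
    have key : ∀ a b : V3, b = succ3 i a → dist (latPt a) (latPt b) = 2 := by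
      intro a b hb
      subst hb
      have hsq : dist (latPt a) (latPt (succ3 i a)) ^ 2 = 4 := by
        rw [dist_latPt_sq]
        fin_cases i <;> (norm_num [succ3]) <;> push_cast <;> ring_nf <;> norm_num
      have hd := dist_nonneg (x := latPt a) (y := latPt (succ3 i a))
      nlinarith
    rcases hi with hi | hi
    · exact key v w hi
    · rw [dist_comm]; exact key w v hi

lemma succ3_ne (i : Fin 3) (x : V3) : succ3 i x ≠ x := by
  intro h
  have h2 := wsum_succ3 i x
  rw [h] at h2
  omega

def DD (A : Finset V3) : Finset (V3 × Fin 3) :=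
  (A ×ˢ (Finset.univ : Finset (Fin 3))).filter fun p => succ3 p.2 p.1 ∈ A

lemma mem_DD {A : Finset V3} {p : V3 × Fin 3} :
    p ∈ DD A ↔ p.1 ∈ A ∧ succ3 p.2 p.1 ∈ A := by
  simp [DD, Finset.mem_filter, Finset.mem_product]

lemma pred_sym2 (a b : EuclideanSpace ℝ (Fin 3)) :
    ((¬ (s(a, b) : Sym2 _).IsDiag) ∧ ∃ x y, s(a, b) = s(x, y) ∧ dist x y = 2) ↔
      (a ≠ b ∧ dist a b = 2) := by
  constructor
  · rintro ⟨hd, x, y, hxy, hdist⟩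
    refine ⟨by simpa [Sym2.mk_isDiag_iff] using hd, ?_⟩
    rw [Sym2.eq_iff] at hxy
    rcases hxy with ⟨rfl, rfl⟩ | ⟨rfl, rfl⟩
    · exact hdist
    · rw [dist_comm]; exact hdist
  · rintro ⟨hne, hd⟩
    exact ⟨by simpa [Sym2.mk_isDiag_iff] using hne, a, b, rfl, hd⟩

lemma touchingPairs_image (A : Finset V3) : touchingPairs (A.image latPt) = (DD A).card := by
  unfold touchingPairs
  symm
  apply Finset.card_bij (i := fun (p : V3 × Fin 3) _ => s(latPt p.1, latPt (succ3 p.2 p.1)))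
  · intro p hp
    rw [mem_DD] at hp
    rw [Finset.mem_filter]
    constructor
    · rw [Finset.mk_mem_sym2_iff]
      exact ⟨Finset.mem_image_of_mem _ hp.1, Finset.mem_image_of_mem _ hp.2⟩
    · rw [pred_sym2]
      refine ⟨fun h => succ3_ne p.2 p.1 (latPt_inj h.symm), ?_⟩
      exact (dist_latPt_eq_two_iff _ _).mpr ⟨p.2, Or.inl rfl⟩
  · intro p hp q hq heq
    rw [Sym2.eq_iff] at heq
    rcases heq with ⟨h1, h2⟩ | ⟨h1, h2⟩
    · have e1 : p.1 = q.1 := latPt_inj h1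
      have e2 : succ3 p.2 p.1 = succ3 q.2 q.1 := latPt_inj h2
      rw [e1] at e2
      exact Prod.ext e1 (succ3_inj_idx e2)
    · exfalso
      have e1 : p.1 = succ3 q.2 q.1 := latPt_inj h1
      have e2 : succ3 p.2 p.1 = q.1 := latPt_inj h2
      have w1 := wsum_succ3 q.2 q.1
      have w2 := wsum_succ3 p.2 p.1
      rw [← e1] at w1
      rw [e2] at w2
      omega
  · intro b hb
    revert hb
    induction b using Sym2.ind with
    | _ u w =>
      intro hb
      rw [Finset.mem_filter] at hb
      obtain ⟨hmem, hpred⟩ := hb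
      rw [Finset.mk_mem_sym2_iff] at hmem
      rw [pred_sym2] at hpred
      obtain ⟨v, hv, rfl⟩ := Finset.mem_image.mp hmem.1
      obtain ⟨v', hv', rfl⟩ := Finset.mem_image.mp hmem.2
      obtain ⟨i, hcase⟩ := (dist_latPt_eq_two_iff _ _).mp hpred.2
      rcases hcase with hcase | hcase
      · refine ⟨(v, i), ?_, ?_⟩
        · rw [mem_DD]; exact ⟨hv, hcase ▸ hv'⟩
        · rw [← hcase]
      · refine ⟨(v', i), ?_, ?_⟩
        · rw [mem_DD]; exact ⟨hv', hcase ▸ hv⟩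
        · rw [← hcase]; exact Sym2.eq_swap

lemma DD_card (A : Finset V3) :
    (DD A).card = ∑ i : Fin 3, (A.filter fun x => succ3 i x ∈ A).card := by
  rw [Finset.card_eq_sum_card_fiberwise (f := Prod.snd) (t := (Finset.univ : Finset (Fin 3)))
    (fun p _ => Finset.mem_univ _)]
  apply Finset.sum_congr rfl
  intro i _
  symm
  apply Finset.card_bij (i := fun x _ => (x, i))
  · intro x hx
    rw [Finset.mem_filter] at hx ⊢
    rw [mem_DD]
    exact ⟨⟨hx.1, hx.2⟩, rfl⟩
  · intro x _ y _ h
    exact (Prod.ext_iff.mp h).1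
  · intro p hp
    rw [Finset.mem_filter, mem_DD] at hp
    obtain ⟨⟨h1, h2⟩, h3⟩ := hp
    exact ⟨p.1, Finset.mem_filter.mpr ⟨h1, by rw [h3] at h2; exact h2⟩, by
      rw [← h3]⟩

lemma amgm_nat (a b c n : ℕ) (h : n ^ 6 ≤ a * (b * c)) : 3 * n ^ 2 ≤ a + b + c := by
  have h27 : 27 * ((a : ℤ) * (b * c)) ≤ ((a : ℤ) + b + c) ^ 3 := by
    have ha : (0 : ℤ) ≤ a := Int.ofNat_nonneg a
    have hb : (0 : ℤ) ≤ b := Int.ofNat_nonneg b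
    have hc : (0 : ℤ) ≤ c := Int.ofNat_nonneg c
    nlinarith [mul_nonneg ha (sq_nonneg ((b : ℤ) - c)), mul_nonneg hb (sq_nonneg ((a : ℤ) - c)),
      mul_nonneg hc (sq_nonneg ((a : ℤ) - b)), mul_nonneg (mul_nonneg ha hb) hc,
      sq_nonneg ((a : ℤ) - b), sq_nonneg ((b : ℤ) - c), sq_nonneg ((a : ℤ) - c)]
  have hcube : (3 * n ^ 2) ^ 3 ≤ (a + b + c) ^ 3 := by
    have : ((3 * n ^ 2 : ℕ) : ℤ) ^ 3 ≤ (((a + b + c : ℕ)) : ℤ) ^ 3 := by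
      push_cast
      calc ((3 : ℤ) * (n : ℤ) ^ 2) ^ 3 = 27 * ((n : ℤ) ^ 6) := by ring
        _ ≤ 27 * ((a : ℤ) * (b * c)) := by
            have : ((n : ℤ)) ^ 6 ≤ (a : ℤ) * (b * c) := by exact_mod_cast h
            linarith
        _ ≤ ((a : ℤ) + b + c) ^ 3 := h27
    exact_mod_cast this
  exact le_of_pow_le_pow_left₀ (by norm_num) (Nat.zero_le _) hcube

lemma edge_bound (A : Finset V3) (k : ℕ) (hcard : A.card = k ^ 3) :
    (DD A).card + 3 * k ^ 2 ≤ 3 * k ^ 3 := by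
  have hline : ∀ i : Fin 3,
      (A.filter fun x => succ3 i x ∈ A).card + (A.image (proj3 i)).card ≤ A.card := fun i =>
    line_bound A (succ3 i) (co3 i) (proj3 i)
      (fun x y hg hf => eq_of_proj3_co3 i hg hf) (proj3_succ3 i) (co3_succ3 i)
  have hlw := loomis_whitney A
  rw [hcard] at hlw
  have hk6 : k ^ 6 ≤ (A.image (proj3 0)).card *
      ((A.image (proj3 1)).card * (A.image (proj3 2)).card) := by
    calc k ^ 6 = (k ^ 3) ^ 2 := by ring
      _ ≤ _ := hlw
  have hsum := amgm_nat _ _ _ k hk6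
  have h0 := hline 0
  have h1 := hline 1
  have h2 := hline 2
  rw [DD_card, Fin.sum_univ_three]
  rw [hcard] at h0 h1 h2
  omega

def gridZ (k : ℕ) : Finset V3 :=
  (Finset.Ico (0 : ℤ) k) ×ˢ (Finset.Ico (0 : ℤ) k) ×ˢ (Finset.Ico (0 : ℤ) k)

lemma gridZ_card (k : ℕ) : (gridZ k).card = k ^ 3 := by
  rw [gridZ, Finset.card_product, Finset.card_product]
  simp [Int.card_Ico]
  ring

lemma DD_gridZ_card (k : ℕ) (hk : 1 ≤ k) : (DD (gridZ k)).card = 3 * k ^ 3 - 3 * k ^ 2 := by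
  have e0 : (gridZ k).filter (fun x => succ3 0 x ∈ gridZ k) =
      (Finset.Ico (0 : ℤ) ((k : ℤ) - 1)) ×ˢ (Finset.Ico (0 : ℤ) k) ×ˢ (Finset.Ico (0 : ℤ) k) := by
    ext ⟨a, b, c⟩
    simp only [gridZ, succ3, Finset.mem_filter, Finset.mem_product, Finset.mem_Ico]
    norm_num
    omega
  have e1 : (gridZ k).filter (fun x => succ3 1 x ∈ gridZ k) =
      (Finset.Ico (0 : ℤ) k) ×ˢ (Finset.Ico (0 : ℤ) ((k : ℤ) - 1)) ×ˢ (Finset.Ico (0 : ℤ) k) := by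
    ext ⟨a, b, c⟩
    simp only [gridZ, succ3, Finset.mem_filter, Finset.mem_product, Finset.mem_Ico]
    norm_num
    omega
  have e2 : (gridZ k).filter (fun x => succ3 2 x ∈ gridZ k) =
      (Finset.Ico (0 : ℤ) k) ×ˢ (Finset.Ico (0 : ℤ) k) ×ˢ (Finset.Ico (0 : ℤ) ((k : ℤ) - 1)) := by
    ext ⟨a, b, c⟩
    simp only [gridZ, succ3, Finset.mem_filter, Finset.mem_product, Finset.mem_Ico]
    norm_num
    omega
  rw [DD_card, Fin.sum_univ_three, e0, e1, e2]
  rw [Finset.card_product, Finset.card_product, Finset.card_product, Finset.card_product,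
    Finset.card_product, Finset.card_product]
  simp [Int.card_Ico]
  obtain ⟨m, rfl⟩ : ∃ m, k = m + 1 := ⟨k - 1, by omega⟩
  simp only [Nat.add_sub_cancel]
  symm
  apply Nat.sub_eq_of_eq_add
  ring

theorem max_contact_cube (k : ℕ) (hk : 1 ≤ k) :
    IsGreatest {m : ℕ | ∃ S : Finset (EuclideanSpace ℝ (Fin 3)),
        (S : Set (EuclideanSpace ℝ (Fin 3))) ⊆ doubledIntLattice ∧
          S.card = k ^ 3 ∧ touchingPairs S = m}
      (3 * k ^ 3 - 3 * k ^ 2) := by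
  constructor
  · refine ⟨(gridZ k).image latPt, ?_, ?_, ?_⟩
    · intro x hx
      rw [Finset.coe_image, Set.mem_image] at hx
      obtain ⟨v, _, rfl⟩ := hx
      exact latPt_mem v
    · rw [Finset.card_image_of_injective _ latPt_inj, gridZ_card]
    · rw [touchingPairs_image, DD_gridZ_card k hk]
  · rintro m ⟨S, hsub, hcard, rfl⟩
    set unlat : EuclideanSpace ℝ (Fin 3) → V3 := fun x =>
      if h : x ∈ doubledIntLattice then Classical.choose (exists_latPt h) else (0, 0, 0)
      with hunlat
    have hid : ∀ x ∈ S, latPt (unlat x) = x := by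
      intro x hx
      have hxl : x ∈ doubledIntLattice := hsub hx
      rw [hunlat]
      simp only [dif_pos hxl]
      exact Classical.choose_spec (exists_latPt hxl)
    set A := S.image unlat with hA
    have hAS : A.image latPt = S := by
      rw [hA, Finset.image_image]
      rw [show S.image (latPt ∘ unlat) = S.image id from Finset.image_congr
        (fun x hx => hid x hx)]
      exact Finset.image_id
    have hAcard : A.card = k ^ 3 := by
      rw [← hcard, hA]
      apply Finset.card_image_of_injOn
      intro x hx y hy hxy
      rw [← hid x hx, ← hid y hy, hxy]
    have := edge_bound A k hAcard
    rw [← hAS, touchingPairs_image]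
    omega
end
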